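/- For every ξ ∈ ℝ, the 3×3 complex matrix Θ with rows (1, −iξ/(1+ξ²), (−ξ² − iξ)/(1+ξ²)²), (iξ/(1+ξ²), 1, −iξ/(1+ξ²)), ((−ξ² + iξ)/(1+ξ²)², iξ/(1+ξ²), 1) is Hermitian and positive definite. -/

import Mathlib

open Matrix
open scoped ComplexOrder

set_option maxHeartbeats 1600000

theorem stmt18 (ξ : ℝ) :
    let Θ : Matrix (Fin 3) (Fin 3) ℂ :=
      !![1, -Complex.I * ξ / (1 + (ξ : ℂ) ^ 2),
           (-(ξ : ℂ) ^ 2 - Complex.I * ξ) / (1 + (ξ : ℂ) ^ 2) ^ 2;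
         Complex.I * ξ / (1 + (ξ : ℂ) ^ 2), 1, -Complex.I * ξ / (1 + (ξ : ℂ) ^ 2);
         (-(ξ : ℂ) ^ 2 + Complex.I * ξ) / (1 + (ξ : ℂ) ^ 2) ^ 2,
           Complex.I * ξ / (1 + (ξ : ℂ) ^ 2), 1]
    Θ.IsHermitian ∧ Θ.PosDef := by
  intro Θ
  have hdR : (0:ℝ) < 1 + ξ ^ 2 := by positivity
  have hdc : (1 + (ξ:ℂ) ^ 2) ≠ 0 := by
    have : ((1 + ξ ^ 2 : ℝ) : ℂ) ≠ 0 := Complex.ofReal_ne_zero.mpr hdR.ne'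
    push_cast at this
    exact this
  have herm : Θ.IsHermitian := by
    ext i j
    fin_cases i <;> fin_cases j <;>
      (try simp [Θ, Matrix.conjTranspose_apply, map_div₀, Complex.conj_I]) <;> try ring
  refine ⟨herm, Matrix.PosDef.of_dotProduct_mulVec_pos herm fun x hx => ?_⟩
  set d : ℝ := 1 + ξ ^ 2 with hd
  set e : ℝ := 1 + ξ ^ 2 + ξ ^ 4 with he
  set U : ℂ := ((d:ℂ)) ^ 2 * x 0 - Complex.I * ξ * (d:ℂ) * x 1 - ((ξ:ℂ) ^ 2 + Complex.I * ξ) * x 2 with hU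
  set W : ℂ := (e:ℂ) * (d:ℂ) * x 1 - ((ξ:ℂ) ^ 2 + Complex.I * ξ * (e:ℂ)) * x 2 with hW
  have hdcd : ((d:ℝ):ℂ) = 1 + (ξ:ℂ) ^ 2 := by push_cast [hd]; ring
  have hecd : ((e:ℝ):ℂ) = (1 + (ξ:ℂ) ^ 2) ^ 2 - (ξ:ℂ) ^ 2 := by push_cast [he]; ring
  have key : ((e:ℂ)) * (d:ℂ) ^ 4 * (star x ⬝ᵥ Θ *ᵥ x)
      = (e:ℂ) * (U * (starRingEnd ℂ) U) + W * (starRingEnd ℂ) W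
        + (((e ^ 2 - ξ ^ 2) * d ^ 2 : ℝ) : ℂ) * (x 2 * (starRingEnd ℂ) (x 2)) := by
    simp only [dotProduct, mulVec, Fin.sum_univ_three, Pi.star_apply, RCLike.star_def, Θ,
      hU, hW]
    try simp only [Matrix.of_apply, Matrix.cons_val', Matrix.cons_val_zero, Matrix.cons_val_one, Matrix.head_cons,
      Matrix.empty_val', Matrix.cons_val_fin_one, Matrix.head_fin_const, Matrix.cons_val_two,
      Matrix.tail_cons]
    push_cast
    rw [hd, he]
    push_cast
    simp only [map_sub, map_add, _root_.map_mul, map_pow, _root_.map_one, Complex.conj_I,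
      Complex.conj_ofReal]
    have h1 : (1:ℂ) + (ξ:ℂ) ^ 2 + (ξ:ℂ) ^ 4 = (1 + (ξ:ℂ) ^ 2) ^ 2 - (ξ:ℂ) ^ 2 := by ring
    rw [h1]
    generalize hA : (1:ℂ) + (ξ:ℂ) ^ 2 = A
    have hA0 : A ≠ 0 := hA ▸ hdc
    field_simp
    ring_nf
    simp only [Complex.I_sq]
    ring
  have hmc : ∀ z : ℂ, z * (starRingEnd ℂ) z = (Complex.normSq z : ℂ) := fun z => Complex.mul_conj z
  rw [hmc, hmc, hmc] at key
  have hR : (0:ℝ) < e * Complex.normSq U + Complex.normSq W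
      + (e ^ 2 - ξ ^ 2) * d ^ 2 * Complex.normSq (x 2) := by
    have he2 : 0 < e ^ 2 - ξ ^ 2 := by nlinarith [sq_nonneg (ξ - 1), sq_nonneg (ξ + 1), sq_nonneg ξ, sq_nonneg (ξ^2)]
    have hep : 0 < e := by nlinarith [sq_nonneg ξ, sq_nonneg (ξ^2)]
    by_cases h2 : x 2 = 0
    · by_cases h1 : x 1 = 0
      · have h0 : x 0 ≠ 0 := by
          intro h0
          apply hx
          funext i
          fin_cases i <;> assumption
        have hUU : U = (d:ℂ) ^ 2 * x 0 := by rw [hU, h1, h2]; ring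
        have : U ≠ 0 := by
          rw [hUU]
          exact mul_ne_zero (pow_ne_zero _ (by exact_mod_cast hdR.ne')) h0
        nlinarith [mul_pos hep (Complex.normSq_pos.mpr this), Complex.normSq_nonneg W,
          mul_nonneg (mul_nonneg he2.le (sq_nonneg d)) (Complex.normSq_nonneg (x 2))]
      · have hWW : W = (e:ℂ) * (d:ℂ) * x 1 := by rw [hW, h2]; ring
        have : W ≠ 0 := by
          rw [hWW]
          exact mul_ne_zero (mul_ne_zero (by exact_mod_cast hep.ne') (by exact_mod_cast hdR.ne')) h1
        nlinarith [Complex.normSq_pos.mpr this, mul_nonneg hep.le (Complex.normSq_nonneg U),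
          mul_nonneg (mul_nonneg he2.le (sq_nonneg d)) (Complex.normSq_nonneg (x 2))]
    · nlinarith [mul_pos (mul_pos he2 (pow_pos hdR 2)) (Complex.normSq_pos.mpr h2),
        mul_nonneg hep.le (Complex.normSq_nonneg U), Complex.normSq_nonneg W]
  have hcpos : (0:ℝ) < e * d ^ 4 := by positivity
  have hQ : star x ⬝ᵥ Θ *ᵥ x
      = (((e * Complex.normSq U + Complex.normSq W
          + (e ^ 2 - ξ ^ 2) * d ^ 2 * Complex.normSq (x 2)) / (e * d ^ 4) : ℝ) : ℂ) := by
    have hc : ((e:ℂ) * (d:ℂ) ^ 4) ≠ 0 := by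
      have : ((e * d ^ 4 : ℝ) : ℂ) ≠ 0 := Complex.ofReal_ne_zero.mpr hcpos.ne'
      push_cast at this
      exact this
    push_cast
    rw [eq_div_iff hc]
    push_cast at key
    linear_combination key
  rw [hQ]
  exact Complex.zero_lt_real.mpr (div_pos hR hcpos)
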